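/- Let q be an odd prime power and n a power of 2 such that x^n + 1 = h'(x)·h''(x) over F_q with h', h'' distinct monic irreducible polynomials of degree n/2, each the reciprocal of the other. Let u ∈ F_q^{2n} be a nonzero vector of Hamming weight < n. Then there is at most one element a of R = F_q[x]/(x^n + 1) such that u ∈ C_a and C_a is self-dual. -/

import Mathlib

open Polynomial

/-- The `n × n` negacirculant matrix with first row `a`. -/
def negacirculantMatrix {F : Type*} [Ring F] {n : ℕ} (a : Fin n → F) :
    Matrix (Fin n) (Fin n) F :=
  Matrix.of fun i j => if (i : ℕ) ≤ (j : ℕ) then a (j - i) else - a (j - i)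

/-- The monic reciprocal polynomial of `h` (for `h` with `h 0 ≠ 0`). -/
noncomputable def recip {F : Type*} [Field F] (h : F[X]) : F[X] :=
  C (h.coeff 0)⁻¹ * h.reverse

namespace NegaAux
variable {F : Type*} [Field F] {n : ℕ}

noncomputable def pv (v : Fin n → F) : F[X] := ∑ i : Fin n, C (v i) * X ^ (i : ℕ)

lemma pv_coeff (v : Fin n → F) (j : Fin n) : (pv v).coeff (j : ℕ) = v j := by
  classical
  rw [pv, finset_sum_coeff, Finset.sum_eq_single j]
  · simp
  · intro i _ hij
    rw [coeff_C_mul, coeff_X_pow, if_neg (fun h => hij (Fin.ext h.symm)), mul_zero]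
  · simp

lemma pv_degree_lt (v : Fin n → F) (hn : 0 < n) : (pv v).degree < (n : ℕ) := by
  refine lt_of_le_of_lt (degree_sum_le _ _) ?_
  rw [Finset.sup_lt_iff (by exact_mod_cast WithBot.bot_lt_coe n)]
  intro i _
  refine lt_of_le_of_lt (degree_mul_le _ _) ?_
  rw [degree_X_pow]
  calc (C (v i)).degree + ((i:ℕ) : WithBot ℕ) ≤ 0 + ((i:ℕ) : WithBot ℕ) :=
        add_le_add_left degree_C_le _
    _ = ((i:ℕ) : WithBot ℕ) := zero_add _
    _ < (n : WithBot ℕ) := by exact_mod_cast i.isLt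

lemma pv_sub (v w : Fin n → F) : pv (v - w) = pv v - pv w := by
  simp [pv, sub_mul, Finset.sum_sub_distrib]

lemma pv_neg (v : Fin n → F) : pv (-v) = - pv v := by
  simp [pv, Finset.sum_neg_distrib]

lemma pv_eq_zero {v : Fin n → F} (h : pv v = 0) : v = 0 := by
  funext j
  have := pv_coeff v j
  rw [h] at this
  simpa using this.symm

lemma pv_single_zero [NeZero n] : pv (Pi.single (0 : Fin n) (1 : F)) = 1 := by
  classical
  rw [pv, Finset.sum_eq_single (0 : Fin n)]
  · simp
  · intro i _ hi; simp [Pi.single_apply, hi]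
  · simp


noncomputable def phiv (v : Fin n → F) : AdjoinRoot (X ^ n + 1 : F[X]) :=
  AdjoinRoot.mk _ (pv v)

lemma phiv_eq (v : Fin n → F) :
    phiv v = ∑ i : Fin n,
      algebraMap F (AdjoinRoot (X ^ n + 1 : F[X])) (v i) *
        (AdjoinRoot.root (X ^ n + 1 : F[X])) ^ (i : ℕ) := by
  rw [phiv, pv, map_sum]
  refine Finset.sum_congr rfl fun i _ => ?_
  rw [map_mul, map_pow, AdjoinRoot.mk_X, AdjoinRoot.mk_C, AdjoinRoot.algebraMap_eq]

lemma root_pow_n (hn : 0 < n) :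
    (AdjoinRoot.root (X ^ n + 1 : F[X])) ^ n = -1 := by
  have h := AdjoinRoot.mk_self (f := (X ^ n + 1 : F[X]))
  rw [map_add, map_pow, AdjoinRoot.mk_X, map_one] at h
  exact eq_neg_of_add_eq_zero_left h

section
variable [NeZero n]

lemma sr_one :
    (-(AdjoinRoot.root (X ^ n + 1 : F[X])) ^ (n - 1)) * AdjoinRoot.root (X ^ n + 1 : F[X]) = 1 := by
  have hn : 0 < n := Nat.pos_of_ne_zero (NeZero.ne n)
  rw [neg_mul, ← pow_succ, Nat.sub_add_cancel hn, root_pow_n hn, neg_neg]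

lemma isUnit_root : IsUnit (AdjoinRoot.root (X ^ n + 1 : F[X])) :=
  IsUnit.of_mul_eq_one _ (by rw [mul_comm]; exact sr_one)

lemma spow {i : ℕ} (hi : i ≤ n) :
    (-(AdjoinRoot.root (X ^ n + 1 : F[X])) ^ (n - 1)) ^ i =
      -(AdjoinRoot.root (X ^ n + 1 : F[X])) ^ (n - i) := by
  set r := AdjoinRoot.root (X ^ n + 1 : F[X])
  have hn : 0 < n := Nat.pos_of_ne_zero (NeZero.ne n)
  have h1 : (-r ^ (n - 1)) ^ i * r ^ i = 1 := by
    rw [← mul_pow, sr_one, one_pow]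
  have h2 : (-(r ^ (n - i))) * r ^ i = 1 := by
    rw [neg_mul, ← pow_add, Nat.sub_add_cancel hi, root_pow_n hn, neg_neg]
  exact (isUnit_root.pow i).mul_right_cancel (h1.trans h2.symm)


lemma phiv_vecMul (c a : Fin n → F) :
    phiv (Matrix.vecMul c (negacirculantMatrix a)) = phiv c * phiv a := by
  classical
  set r := AdjoinRoot.root (X ^ n + 1 : F[X]) with hr
  have hn : 0 < n := Nat.pos_of_ne_zero (NeZero.ne n)
  have hrn : r ^ n = -1 := root_pow_n hn
  rw [phiv_eq, phiv_eq, phiv_eq, Finset.sum_mul_sum]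
  have lhs : ∀ j : Fin n,
      algebraMap F (AdjoinRoot (X ^ n + 1 : F[X])) ((Matrix.vecMul c (negacirculantMatrix a)) j) * r ^ (j : ℕ)
        = ∑ i : Fin n, algebraMap F _ (c i * (negacirculantMatrix a) i j) * r ^ (j : ℕ) := by
    intro j
    rw [Matrix.vecMul, dotProduct]
    rw [map_sum, Finset.sum_mul]
  simp +zetaDelta only [lhs]
  rw [Finset.sum_comm]
  refine Finset.sum_congr rfl fun i _ => ?_
  rw [← Equiv.sum_comp (Equiv.addLeft i)]
  refine Finset.sum_congr rfl fun k _ => ?_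
  simp only [Equiv.coe_addLeft]
  have hval : ((i + k : Fin n) : ℕ) = ((i : ℕ) + (k : ℕ)) % n := Fin.val_add i k
  have hsub : (i + k) - i = k := add_sub_cancel_left i k
  rw [negacirculantMatrix]
  simp only [Matrix.of_apply, hsub]
  by_cases hlt : (i : ℕ) + (k : ℕ) < n
  · have hv : ((i + k : Fin n) : ℕ) = (i : ℕ) + (k : ℕ) := by
      rw [hval, Nat.mod_eq_of_lt hlt]
    rw [if_pos (by rw [hv]; omega), hv, map_mul, pow_add]
    ring
  · have hv : ((i + k : Fin n) : ℕ) = (i : ℕ) + (k : ℕ) - n := by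
      rw [hval, Nat.mod_eq_sub_mod (by omega), Nat.mod_eq_of_lt (by omega)]
    have hik : (i : ℕ) + (k : ℕ) = ((i : ℕ) + (k : ℕ) - n) + n := by omega
    rw [if_neg (by rw [hv]; have := k.isLt; omega), hv, map_mul, map_neg]
    have hpow : r ^ ((i : ℕ) + (k : ℕ) - n) * r ^ n = r ^ (i : ℕ) * r ^ (k : ℕ) := by
      rw [← pow_add, ← pow_add]; congr 1; omega
    rw [hrn] at hpow
    linear_combination (algebraMap F (AdjoinRoot (X ^ n + 1 : F[X])) (c i) *
      algebraMap F (AdjoinRoot (X ^ n + 1 : F[X])) (a k)) * hpow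

noncomputable def conjv (a : Fin n → F) : Fin n → F :=
  fun j => if j = 0 then a 0 else -a (-j)

lemma transpose_nega (a : Fin n → F) :
    (negacirculantMatrix a).transpose = negacirculantMatrix (conjv a) := by
  ext i j
  simp only [Matrix.transpose_apply, negacirculantMatrix, Matrix.of_apply, conjv]
  rcases lt_trichotomy (i : ℕ) (j : ℕ) with h | h | h
  · have hij : i ≠ j := fun he => by rw [he] at h; omega
    have hji : j - i ≠ 0 := sub_ne_zero.mpr hij.symm
    rw [if_neg (by omega), if_pos (by omega), if_neg hji, neg_sub]
  · have hij : i = j := Fin.ext h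
    subst hij
    rw [if_pos le_rfl, if_pos le_rfl, sub_self, if_pos rfl]
  · have hij : i ≠ j := fun he => by rw [he] at h; omega
    have hji : j - i ≠ 0 := sub_ne_zero.mpr hij.symm
    rw [if_pos (by omega), if_neg (by omega), if_neg hji, neg_sub, neg_neg]

lemma phiv_conjv (a : Fin n → F) :
    phiv (conjv a) = ∑ i : Fin n,
      algebraMap F (AdjoinRoot (X ^ n + 1 : F[X])) (a i) *
        (-(AdjoinRoot.root (X ^ n + 1 : F[X])) ^ (n - 1)) ^ (i : ℕ) := by
  classical
  set r := AdjoinRoot.root (X ^ n + 1 : F[X]) with hr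
  rw [phiv_eq, ← Equiv.sum_comp (Equiv.neg (Fin n))]
  refine Finset.sum_congr rfl fun j _ => ?_
  simp only [Equiv.neg_apply]
  by_cases hj : j = 0
  · subst hj; simp [conjv]
  · have hjv : (j : ℕ) ≠ 0 := fun h => hj (Fin.ext h)
    have h1 : conjv a (-j) = -a j := by
      rw [conjv, if_neg (by simpa using hj), neg_neg]
    have h2 : ((-j : Fin n) : ℕ) = n - (j : ℕ) := by
      rw [Fin.coe_neg]
      have := j.isLt
      rw [Nat.mod_eq_of_lt (by omega)]
    rw [h1, h2, map_neg, spow (le_of_lt j.isLt)]; ring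


lemma aeval_recip {h : F[X]} {m : ℕ} (hdeg : h.natDegree = m)
    (hdeg2 : (C (h.coeff 0)⁻¹ * h.reverse).natDegree = m) :
    aeval (AdjoinRoot.root (X ^ n + 1 : F[X])) (C (h.coeff 0)⁻¹ * h.reverse)
      = algebraMap F (AdjoinRoot (X ^ n + 1 : F[X])) (h.coeff 0)⁻¹ *
        ((AdjoinRoot.root (X ^ n + 1 : F[X])) ^ m *
          aeval (-(AdjoinRoot.root (X ^ n + 1 : F[X])) ^ (n - 1)) h) := by
  classical
  set r := AdjoinRoot.root (X ^ n + 1 : F[X]) with hrdef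
  set s : AdjoinRoot (X ^ n + 1 : F[X]) := -r ^ (n - 1) with hsdef
  set e := (h.coeff 0)⁻¹ with hedef
  have h1 : ∀ i : ℕ, s ^ i * r ^ i = 1 := fun i => by
    rw [← mul_pow, hsdef, sr_one, one_pow]
  have hpow : ∀ i : ℕ, i ≤ m → r ^ m * s ^ i = r ^ (m - i) := by
    intro i hi
    calc r ^ m * s ^ i = r ^ (m - i) * (r ^ i * s ^ i) := by
          rw [← mul_assoc, ← pow_add]; congr 2; omega
      _ = r ^ (m - i) := by rw [mul_comm (r ^ i), h1, mul_one]
  rw [aeval_eq_sum_range' (n := m + 1) (by omega) r,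
    aeval_eq_sum_range' (n := m + 1) (by omega) s,
    ← Finset.sum_range_reflect]
  rw [Finset.mul_sum, Finset.mul_sum]
  refine Finset.sum_congr rfl fun i hi => ?_
  rw [Finset.mem_range] at hi
  have him : i ≤ m := by omega
  have hred : m + 1 - 1 - i = m - i := by omega
  rw [hred]
  have hcoeff : (C e * h.reverse).coeff (m - i) = e * h.coeff i := by
    rw [coeff_C_mul, coeff_reverse, hdeg, revAt_le (by omega)]
    congr 2
    omega
  rw [hcoeff, Algebra.smul_def, Algebra.smul_def, map_mul, ← hpow i him]
  ring

lemma mul_eq_zero_of_coprime_eq {f p q : F[X]} (hf : f = p * q) (hcop : IsCoprime q p)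
    (w1 w2 : AdjoinRoot f)
    (h : AdjoinRoot.mk f p * w1 = AdjoinRoot.mk f q * w2) :
    AdjoinRoot.mk f p * w1 = 0 := by
  obtain ⟨Y, hY⟩ := AdjoinRoot.mk_surjective w1
  obtain ⟨Z, hZ⟩ := AdjoinRoot.mk_surjective w2
  have hdvd : f ∣ p * Y - q * Z := by
    rw [← AdjoinRoot.mk_eq_zero, map_sub, map_mul, map_mul, hY, hZ, h, sub_self]
  have h1 : q ∣ p * Y := by
    have h2 : q ∣ p * Y - q * Z := dvd_trans ⟨p, by rw [hf]; ring⟩ hdvd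
    have h3 := dvd_add h2 (dvd_mul_right q Z)
    simpa using h3
  obtain ⟨W, hW⟩ := hcop.dvd_of_dvd_mul_left h1
  rw [← hY, ← map_mul, AdjoinRoot.mk_eq_zero, hW, hf]
  exact ⟨W, by ring⟩

end
end NegaAux

theorem selfDual_code_through_low_weight_vector_unique
    {q n : ℕ} (F : Type*) [Field F] [Fintype F] [DecidableEq F]
    (hcard : Fintype.card F = q) (hodd : Odd q) (hn : ∃ k : ℕ, n = 2 ^ k)
    (h' h'' : F[X]) (hne : h' ≠ h'') (hmon' : h'.Monic) (hmon'' : h''.Monic)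
    (hirr' : Irreducible h') (hirr'' : Irreducible h'')
    (hdeg' : h'.natDegree = n / 2) (hdeg'' : h''.natDegree = n / 2)
    (hrec : h'' = recip h')
    (hfact : (X ^ n + 1 : F[X]) = h' * h'')
    (u : Fin n ⊕ Fin n → F) (hu : u ≠ 0) (hwt : hammingNorm u < n) :
    ∀ a b : Fin n → F,
      ((∃ c : Fin n → F, u = Sum.elim c (Matrix.vecMul c (negacirculantMatrix a))) ∧
        negacirculantMatrix a * (negacirculantMatrix a).transpose = -1) →
      ((∃ c : Fin n → F, u = Sum.elim c (Matrix.vecMul c (negacirculantMatrix b))) ∧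
        negacirculantMatrix b * (negacirculantMatrix b).transpose = -1) →
      a = b := by
  classical
  intro a b hA hB
  obtain ⟨⟨c, hc⟩, hAd⟩ := hA
  obtain ⟨⟨c', hc'⟩, hBd⟩ := hB
  have hmpos : 0 < n / 2 := hdeg' ▸ hirr'.natDegree_pos
  have hnpos : 0 < n := by omega
  haveI : NeZero n := ⟨by omega⟩
  set m := n / 2 with hm
  have h'ne : h' ≠ 0 := hmon'.ne_zero
  have h''ne : h'' ≠ 0 := hmon''.ne_zero
  have hfdeg : (X ^ n + 1 : F[X]).natDegree = n := by
    rw [← C_1, natDegree_X_pow_add_C]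
  have hnm : n = m + m := by
    have h0 := hfdeg
    rw [hfact, natDegree_mul h'ne h''ne, hdeg', hdeg''] at h0
    omega
  set r := AdjoinRoot.root (X ^ n + 1 : F[X]) with hrdef
  set s : AdjoinRoot (X ^ n + 1 : F[X]) := -r ^ (n - 1) with hsdef
  have hs0 : aeval s (X ^ n + 1 : F[X]) = 0 := by
    rw [map_add, map_pow, aeval_X, map_one, hsdef, NegaAux.spow (le_refl n)]
    simp
  set τ : AdjoinRoot (X ^ n + 1 : F[X]) →ₐ[F] AdjoinRoot (X ^ n + 1 : F[X]) :=
    AdjoinRoot.liftAlgHom _ (Algebra.ofId F _) s hs0 with hτdef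
  have hτmk : ∀ p : F[X], τ (AdjoinRoot.mk (X ^ n + 1 : F[X]) p) = aeval s p :=
    fun p => AdjoinRoot.liftAlgHom_mk _ _ _ hs0 p
  have hτr : τ r = s := AdjoinRoot.liftAlgHom_root _ _ _ hs0
  have hphiconj : ∀ v : Fin n → F,
      NegaAux.phiv (NegaAux.conjv v) = τ (NegaAux.phiv v) := by
    intro v
    rw [NegaAux.phiv_conjv, NegaAux.phiv, hτmk, NegaAux.pv, map_sum]
    refine Finset.sum_congr rfl fun i _ => ?_
    rw [map_mul, map_pow, aeval_X, aeval_C]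
  -- self-duality gives phiv x * τ (phiv x) = -1
  have hSD : ∀ x : Fin n → F,
      negacirculantMatrix x * (negacirculantMatrix x).transpose = -1 →
      NegaAux.phiv x * τ (NegaAux.phiv x) = -1 := by
    intro x hx
    rw [NegaAux.transpose_nega] at hx
    have h0 := congrArg (fun M => Matrix.vecMul (Pi.single (0 : Fin n) (1 : F)) M) hx
    simp only [← Matrix.vecMul_vecMul] at h0
    have h2 : Matrix.vecMul (Pi.single (0 : Fin n) (1 : F)) (-1 : Matrix (Fin n) (Fin n) F)
        = -(Pi.single (0 : Fin n) (1 : F)) := by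
      rw [show (-1 : Matrix (Fin n) (Fin n) F) = -(1 : Matrix (Fin n) (Fin n) F) from rfl,
        Matrix.vecMul_neg, Matrix.vecMul_one]
    rw [h2] at h0
    have h1 := congrArg NegaAux.phiv h0
    rw [NegaAux.phiv_vecMul, NegaAux.phiv_vecMul] at h1
    have hone : NegaAux.phiv (Pi.single (0 : Fin n) (1 : F)) = 1 := by
      rw [NegaAux.phiv, NegaAux.pv_single_zero, map_one]
    have hnegone : NegaAux.phiv (-(Pi.single (0 : Fin n) (1 : F)))
        = (-1 : AdjoinRoot (X ^ n + 1 : F[X])) := by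
      rw [NegaAux.phiv, NegaAux.pv_neg, map_neg, ← NegaAux.phiv, hone]
    rw [hone, one_mul, hphiconj, hnegone] at h1
    exact h1
  have ha1 := hSD a hAd
  have hb1 := hSD b hBd
  -- equality of the two codeword representations
  have hcc : c = c' := by
    funext i
    exact congrFun (hc.symm.trans hc') (Sum.inl i)
  subst hcc
  have hvec : Matrix.vecMul c (negacirculantMatrix a)
      = Matrix.vecMul c (negacirculantMatrix b) := by
    funext j
    exact congrFun (hc.symm.trans hc') (Sum.inr j)
  have hcne : c ≠ 0 := by
    intro h0
    apply hu
    rw [hc, h0]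
    funext x
    cases x with
    | inl i => rfl
    | inr j => simp [Matrix.zero_vecMul]
  have hpvcne : NegaAux.pv c ≠ 0 := fun h0 => hcne (NegaAux.pv_eq_zero h0)
  have hprod : NegaAux.phiv c * (NegaAux.phiv a - NegaAux.phiv b) = 0 := by
    have h0 := congrArg NegaAux.phiv hvec
    rw [NegaAux.phiv_vecMul, NegaAux.phiv_vecMul] at h0
    linear_combination h0
  have hdvdf : (X ^ n + 1 : F[X]) ∣ NegaAux.pv c * (NegaAux.pv a - NegaAux.pv b) := by
    rw [← AdjoinRoot.mk_eq_zero, map_mul, map_sub]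
    exact hprod
  have hcop : IsCoprime h' h'' :=
    (hirr'.coprime_iff_not_dvd).mpr fun hdvd =>
      hne (Polynomial.eq_of_monic_of_associated hmon' hmon''
        (hirr'.associated_of_dvd hirr'' hdvd))
  have hfinish : (X ^ n + 1 : F[X]) ∣ (NegaAux.pv a - NegaAux.pv b) → a = b := by
    intro hd
    have hdeg : (NegaAux.pv a - NegaAux.pv b).degree < (X ^ n + 1 : F[X]).degree := by
      rw [← C_1, degree_X_pow_add_C hnpos, ← NegaAux.pv_sub]
      exact NegaAux.pv_degree_lt _ hnpos
    have h0 := Polynomial.eq_zero_of_dvd_of_degree_lt hd hdeg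
    rw [← NegaAux.pv_sub] at h0
    exact sub_eq_zero.mp (NegaAux.pv_eq_zero h0)
  -- the constant coefficient of h'
  have hc00 : h'.coeff 0 * h''.coeff 0 = 1 := by
    have h0 := congrArg (fun p : F[X] => p.coeff 0) hfact
    simp only [coeff_add, coeff_X_pow, coeff_one, mul_coeff_zero] at h0
    rw [if_neg (hnpos.ne : (0:ℕ) ≠ n)] at h0
    simpa using h0.symm
  have h'0ne : h'.coeff 0 ≠ 0 := left_ne_zero_of_mul_eq_one hc00
  -- key reciprocal relation
  have hP'' : AdjoinRoot.mk (X ^ n + 1 : F[X]) h''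
      = algebraMap F (AdjoinRoot (X ^ n + 1 : F[X])) (h'.coeff 0)⁻¹ *
        (r ^ m * τ (AdjoinRoot.mk (X ^ n + 1 : F[X]) h')) := by
    rw [hτmk, ← AdjoinRoot.aeval_eq, hrec, recip]
    exact NegaAux.aeval_recip hdeg'
      (by rw [show C (h'.coeff 0)⁻¹ * h'.reverse = h'' from (hrec ▸ rfl : recip h' = h'') ▸ rfl]
          exact hdeg'')
  have hsm : s ^ m * r ^ m = 1 := by rw [← mul_pow, hsdef, NegaAux.sr_one, one_pow]
  have hτP' : τ (AdjoinRoot.mk (X ^ n + 1 : F[X]) h')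
      = algebraMap F (AdjoinRoot (X ^ n + 1 : F[X])) (h'.coeff 0) *
        (s ^ m * AdjoinRoot.mk (X ^ n + 1 : F[X]) h'') := by
    have he : algebraMap F (AdjoinRoot (X ^ n + 1 : F[X])) ((h'.coeff 0) * (h'.coeff 0)⁻¹) = 1 := by
      rw [mul_inv_cancel₀ h'0ne, map_one]
    calc τ (AdjoinRoot.mk (X ^ n + 1 : F[X]) h')
        = (algebraMap F _ ((h'.coeff 0) * (h'.coeff 0)⁻¹)) *
            ((s ^ m * r ^ m) * τ (AdjoinRoot.mk (X ^ n + 1 : F[X]) h')) := by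
          rw [he, hsm, one_mul, one_mul]
      _ = algebraMap F _ (h'.coeff 0) *
            (s ^ m * (algebraMap F _ (h'.coeff 0)⁻¹ *
              (r ^ m * τ (AdjoinRoot.mk (X ^ n + 1 : F[X]) h')))) := by
          rw [map_mul]; ring
      _ = algebraMap F _ (h'.coeff 0) * (s ^ m * AdjoinRoot.mk (X ^ n + 1 : F[X]) h'') := by
          rw [← hP'']
  have hτs : τ s = r := by
    rw [hsdef, map_neg, map_pow, hτr, NegaAux.spow (by omega), neg_neg,
      show n - (n - 1) = 1 by omega, pow_one]
  have hττ : ∀ p : F[X],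
      τ (τ (AdjoinRoot.mk (X ^ n + 1 : F[X]) p)) = AdjoinRoot.mk (X ^ n + 1 : F[X]) p := by
    intro p
    rw [hτmk, ← Polynomial.aeval_algHom_apply, hτs, AdjoinRoot.aeval_eq]
  have hτP'' : τ (AdjoinRoot.mk (X ^ n + 1 : F[X]) h'')
      = algebraMap F (AdjoinRoot (X ^ n + 1 : F[X])) (h'.coeff 0)⁻¹ *
        (s ^ m * AdjoinRoot.mk (X ^ n + 1 : F[X]) h') := by
    rw [hP'', map_mul, map_mul, map_pow, hτr, hττ, AlgHom.commutes]
  -- relation from self-duality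
  have hrel : τ (NegaAux.phiv a) * (NegaAux.phiv a - NegaAux.phiv b)
      = -(NegaAux.phiv b * (τ (NegaAux.phiv a) - τ (NegaAux.phiv b))) := by
    linear_combination ha1 - hb1
  have hu1 : (-(NegaAux.phiv a)) * τ (NegaAux.phiv a) = 1 := by linear_combination -ha1
  have hfinal : τ (NegaAux.phiv a) * (NegaAux.phiv a - NegaAux.phiv b) = 0 → a = b := by
    intro key
    have hδ0 : NegaAux.phiv a - NegaAux.phiv b = 0 := by
      calc NegaAux.phiv a - NegaAux.phiv b
          = ((-(NegaAux.phiv a)) * τ (NegaAux.phiv a)) * (NegaAux.phiv a - NegaAux.phiv b) := by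
            rw [hu1, one_mul]
        _ = (-(NegaAux.phiv a)) * (τ (NegaAux.phiv a) * (NegaAux.phiv a - NegaAux.phiv b)) := by
            ring
        _ = 0 := by rw [key, mul_zero]
    apply hfinish
    rw [← AdjoinRoot.mk_eq_zero, map_sub]
    exact hδ0
  by_cases hd1 : h' ∣ (NegaAux.pv a - NegaAux.pv b)
  · by_cases hd2 : h'' ∣ (NegaAux.pv a - NegaAux.pv b)
    · exact hfinish (hfact ▸ hcop.mul_dvd hd1 hd2)
    · -- case 2 : h' divides the difference
      obtain ⟨G, hG⟩ := hd1
      have hδ : NegaAux.phiv a - NegaAux.phiv b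
          = AdjoinRoot.mk (X ^ n + 1 : F[X]) h' * AdjoinRoot.mk (X ^ n + 1 : F[X]) G := by
        rw [NegaAux.phiv, NegaAux.phiv, ← map_sub, ← map_mul, hG]
      have hτδ : τ (NegaAux.phiv a) - τ (NegaAux.phiv b)
          = AdjoinRoot.mk (X ^ n + 1 : F[X]) h'' *
            (algebraMap F _ (h'.coeff 0) * (s ^ m * τ (AdjoinRoot.mk (X ^ n + 1 : F[X]) G))) := by
        rw [← map_sub, hδ, map_mul, hτP']
        ring
      apply hfinal
      have heq : AdjoinRoot.mk (X ^ n + 1 : F[X]) h' *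
            (τ (NegaAux.phiv a) * AdjoinRoot.mk (X ^ n + 1 : F[X]) G)
          = AdjoinRoot.mk (X ^ n + 1 : F[X]) h'' *
            (-(NegaAux.phiv b * (algebraMap F _ (h'.coeff 0) *
              (s ^ m * τ (AdjoinRoot.mk (X ^ n + 1 : F[X]) G))))) := by
        calc AdjoinRoot.mk (X ^ n + 1 : F[X]) h' *
              (τ (NegaAux.phiv a) * AdjoinRoot.mk (X ^ n + 1 : F[X]) G)
            = τ (NegaAux.phiv a) * (NegaAux.phiv a - NegaAux.phiv b) := by rw [hδ]; ring
          _ = -(NegaAux.phiv b * (τ (NegaAux.phiv a) - τ (NegaAux.phiv b))) := hrel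
          _ = _ := by rw [hτδ]; ring
      have h0 := NegaAux.mul_eq_zero_of_coprime_eq hfact hcop.symm _ _ heq
      calc τ (NegaAux.phiv a) * (NegaAux.phiv a - NegaAux.phiv b)
          = AdjoinRoot.mk (X ^ n + 1 : F[X]) h' *
              (τ (NegaAux.phiv a) * AdjoinRoot.mk (X ^ n + 1 : F[X]) G) := by rw [hδ]; ring
        _ = 0 := h0
  · by_cases hd2 : h'' ∣ (NegaAux.pv a - NegaAux.pv b)
    · -- case 3 : h'' divides the difference
      obtain ⟨G, hG⟩ := hd2
      have hδ : NegaAux.phiv a - NegaAux.phiv b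
          = AdjoinRoot.mk (X ^ n + 1 : F[X]) h'' * AdjoinRoot.mk (X ^ n + 1 : F[X]) G := by
        rw [NegaAux.phiv, NegaAux.phiv, ← map_sub, ← map_mul, hG]
      have hτδ : τ (NegaAux.phiv a) - τ (NegaAux.phiv b)
          = AdjoinRoot.mk (X ^ n + 1 : F[X]) h' *
            (algebraMap F _ (h'.coeff 0)⁻¹ * (s ^ m * τ (AdjoinRoot.mk (X ^ n + 1 : F[X]) G))) := by
        rw [← map_sub, hδ, map_mul, hτP'']
        ring
      apply hfinal
      have heq : AdjoinRoot.mk (X ^ n + 1 : F[X]) h'' *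
            (τ (NegaAux.phiv a) * AdjoinRoot.mk (X ^ n + 1 : F[X]) G)
          = AdjoinRoot.mk (X ^ n + 1 : F[X]) h' *
            (-(NegaAux.phiv b * (algebraMap F _ (h'.coeff 0)⁻¹ *
              (s ^ m * τ (AdjoinRoot.mk (X ^ n + 1 : F[X]) G))))) := by
        calc AdjoinRoot.mk (X ^ n + 1 : F[X]) h'' *
              (τ (NegaAux.phiv a) * AdjoinRoot.mk (X ^ n + 1 : F[X]) G)
            = τ (NegaAux.phiv a) * (NegaAux.phiv a - NegaAux.phiv b) := by rw [hδ]; ring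
          _ = -(NegaAux.phiv b * (τ (NegaAux.phiv a) - τ (NegaAux.phiv b))) := hrel
          _ = _ := by rw [hτδ]; ring
      have h0 := NegaAux.mul_eq_zero_of_coprime_eq (hfact.trans (mul_comm h' h'')) hcop _ _ heq
      calc τ (NegaAux.phiv a) * (NegaAux.phiv a - NegaAux.phiv b)
          = AdjoinRoot.mk (X ^ n + 1 : F[X]) h'' *
              (τ (NegaAux.phiv a) * AdjoinRoot.mk (X ^ n + 1 : F[X]) G) := by rw [hδ]; ring
        _ = 0 := h0
    · -- neither divides : contradiction with c ≠ 0
      exfalso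
      have hf' : h' ∣ NegaAux.pv c * (NegaAux.pv a - NegaAux.pv b) :=
        dvd_trans ⟨h'', hfact⟩ hdvdf
      have hf'' : h'' ∣ NegaAux.pv c * (NegaAux.pv a - NegaAux.pv b) :=
        dvd_trans ⟨h', by rw [hfact]; ring⟩ hdvdf
      have hp' : h' ∣ NegaAux.pv c := (hirr'.prime.2.2 _ _ hf').resolve_right hd1
      have hp'' : h'' ∣ NegaAux.pv c := (hirr''.prime.2.2 _ _ hf'').resolve_right hd2
      have hdall : (X ^ n + 1 : F[X]) ∣ NegaAux.pv c := hfact ▸ hcop.mul_dvd hp' hp''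
      have hdegc : (NegaAux.pv c).degree < (X ^ n + 1 : F[X]).degree := by
        rw [← C_1, degree_X_pow_add_C hnpos]
        exact NegaAux.pv_degree_lt _ hnpos
      exact hpvcne (Polynomial.eq_zero_of_dvd_of_degree_lt hdall hdegc)
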